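/- The cardinality of the greedy subset G equals Σ_φ Π_{j=1}^{n} a_{φ(j)j}, where the sum runs over all functions φ : {1,…,n} → {0,…,n} satisfying #φ^{−1}({0,…,I}) ≤ I + 1 for every I with 0 ≤ I < n. -/

import Mathlib

open Finset

/-- The partial sum `Σ_{k=0}^{i-1} a_{k j}` as an integer. -/
def psum (a : ℕ → ℕ → ℕ) (i j : ℕ) : ℤ := ∑ k ∈ Finset.range i, (a k j : ℤ)

/-- The type function of a lattice point `b`: `typeOf a b j` is the unique `i`
with `Σ_{k=0}^{i-1} a_{kj} ≤ b_j < Σ_{k=0}^{i} a_{kj}` (defined as the least `i`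
with `b_j < Σ_{k=0}^{i} a_{kj}`). -/
noncomputable def typeOf (a : ℕ → ℕ → ℕ) {n : ℕ} (b : Fin n → ℤ) (j : Fin n) : ℕ :=
  sInf {i : ℕ | b j < psum a (i + 1) (j : ℕ)}

lemma psum_mono (a : ℕ → ℕ → ℕ) (j : ℕ) {i i' : ℕ} (h : i ≤ i') :
    psum a i j ≤ psum a i' j :=
  Finset.sum_le_sum_of_subset_of_nonneg (Finset.range_subset_range.2 h)
    (fun _ _ _ => Int.natCast_nonneg _)

lemma psum_nonneg (a : ℕ → ℕ → ℕ) (i j : ℕ) : 0 ≤ psum a i j :=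
  Finset.sum_nonneg fun _ _ => Int.natCast_nonneg _

lemma typeOf_def (a : ℕ → ℕ → ℕ) {n : ℕ} (b : Fin n → ℤ) (j : Fin n) :
    typeOf a b j = sInf {i : ℕ | b j < psum a (i + 1) (j : ℕ)} := rfl

lemma typeOf_le (a : ℕ → ℕ → ℕ) {n : ℕ} (b : Fin n → ℤ) (j : Fin n) {m : ℕ}
    (h : b j < psum a (m + 1) (j : ℕ)) : typeOf a b j ≤ m :=
  Nat.sInf_le h

lemma lt_psum_typeOf (a : ℕ → ℕ → ℕ) {n : ℕ} (b : Fin n → ℤ) (j : Fin n) {m : ℕ}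
    (h : b j < psum a (m + 1) (j : ℕ)) :
    b j < psum a (typeOf a b j + 1) (j : ℕ) := by
  have hne : {i : ℕ | b j < psum a (i + 1) (j : ℕ)}.Nonempty := ⟨m, h⟩
  exact Nat.sInf_mem hne

lemma psum_typeOf_le (a : ℕ → ℕ → ℕ) {n : ℕ} (b : Fin n → ℤ) (j : Fin n)
    (h0 : 0 ≤ b j) : psum a (typeOf a b j) (j : ℕ) ≤ b j := by
  rcases Nat.eq_zero_or_pos (typeOf a b j) with hz | hp
  · rw [hz]; simpa [psum] using h0
  · have hlt : typeOf a b j - 1 < sInf {i : ℕ | b j < psum a (i + 1) (j : ℕ)} := by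
      rw [← typeOf_def]; omega
    have hnot := Nat.notMem_of_lt_sInf hlt
    simp only [Set.mem_setOf_eq, not_lt] at hnot
    have he : typeOf a b j - 1 + 1 = typeOf a b j := by omega
    rwa [he] at hnot

lemma typeOf_eq (a : ℕ → ℕ → ℕ) {n : ℕ} (b : Fin n → ℤ) (j : Fin n) (i : ℕ)
    (h1 : psum a i (j : ℕ) ≤ b j) (h2 : b j < psum a (i + 1) (j : ℕ)) :
    typeOf a b j = i := by
  refine le_antisymm (typeOf_le a b j h2) ?_
  by_contra h
  push_neg at h
  have hmem := lt_psum_typeOf a b j h2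
  have : psum a (typeOf a b j + 1) (j : ℕ) ≤ psum a i (j : ℕ) := psum_mono a j h
  linarith

lemma ncard_setOf {α : Type*} [Fintype α] (p : α → Prop) [DecidablePred p] :
    Set.ncard {x | p x} = (Finset.univ.filter p).card := by
  rw [← Set.ncard_coe_finset]
  congr 1
  ext x
  simp

open scoped Classical in
/-- The cardinality of the greedy subset `G` equals
`Σ_φ Π_j a_{φ(j) j}`, the sum running over all `φ : {1,…,n} → {0,…,n}` with
`#φ⁻¹({0,…,I}) ≤ I + 1` for every `I < n`. -/
theorem card_greedy_subset
    (n : ℕ) (hn : 0 < n) (a : ℕ → ℕ → ℕ)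
    (hpos : ∀ i ≤ n, ∀ j < n, 0 < a i j)
    (hord : ∀ j < n, ∀ i i' : ℕ, i ≤ i' → i' < n → a i j ≤ a i' j) :
    Set.ncard {b : Fin n → ℤ |
        (∀ j : Fin n, 0 ≤ b j ∧ b j < psum a (n + 1) (j : ℕ)) ∧
        ∀ I < n, Set.ncard {j : Fin n | typeOf a b j ≤ I} ≤ I + 1} =
      ∑ φ ∈ Finset.univ.filter
          (fun φ : Fin n → Fin (n + 1) =>
            ∀ I < n, (Finset.univ.filter fun j : Fin n => (φ j : ℕ) ≤ I).card ≤ I + 1),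
        ∏ j : Fin n, a (φ j) (j : ℕ) := by
  classical
  set s : Finset (Fin n → Fin (n + 1)) := Finset.univ.filter
      (fun φ : Fin n → Fin (n + 1) =>
        ∀ I < n, (Finset.univ.filter fun j : Fin n => (φ j : ℕ) ≤ I).card ≤ I + 1) with hs
  set box : (Fin n → Fin (n + 1)) → Finset (Fin n → ℤ) :=
    fun φ => Fintype.piFinset fun j =>
      Finset.Ico (psum a (φ j) (j : ℕ)) (psum a ((φ j : ℕ) + 1) (j : ℕ)) with hbox
  have hbox_type : ∀ (φ : Fin n → Fin (n + 1)) (b : Fin n → ℤ), b ∈ box φ →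
      ∀ j : Fin n, typeOf a b j = (φ j : ℕ) := by
    intro φ b hb j
    rw [hbox, Fintype.mem_piFinset] at hb
    have := hb j
    rw [Finset.mem_Ico] at this
    exact typeOf_eq a b j _ this.1 this.2
  have hset : {b : Fin n → ℤ |
        (∀ j : Fin n, 0 ≤ b j ∧ b j < psum a (n + 1) (j : ℕ)) ∧
        ∀ I < n, Set.ncard {j : Fin n | typeOf a b j ≤ I} ≤ I + 1} =
      ↑(s.biUnion box) := by
    ext b
    simp only [Set.mem_setOf_eq, Finset.coe_biUnion, Set.mem_iUnion, Finset.mem_coe,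
      Finset.mem_biUnion]
    constructor
    · rintro ⟨hb, hcond⟩
      have htle : ∀ j : Fin n, typeOf a b j ≤ n := fun j => typeOf_le a b j (hb j).2
      refine ⟨fun j => ⟨typeOf a b j, Nat.lt_succ_of_le (htle j)⟩, ?_, ?_⟩
      · rw [hs, Finset.mem_filter]
        refine ⟨Finset.mem_univ _, fun I hI => ?_⟩
        have := hcond I hI
        rwa [ncard_setOf] at this
      · rw [hbox, Fintype.mem_piFinset]
        intro j
        rw [Finset.mem_Ico]
        exact ⟨psum_typeOf_le a b j (hb j).1, lt_psum_typeOf a b j (hb j).2⟩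
    · rintro ⟨φ, hφ, hb⟩
      have htype := hbox_type φ b hb
      rw [hbox, Fintype.mem_piFinset] at hb
      constructor
      · intro j
        have := hb j
        rw [Finset.mem_Ico] at this
        refine ⟨le_trans (psum_nonneg a _ _) this.1, lt_of_lt_of_le this.2 ?_⟩
        refine psum_mono a _ ?_
        have := (φ j).2
        omega
      · intro I hI
        rw [hs, Finset.mem_filter] at hφ
        have := hφ.2 I hI
        rw [ncard_setOf]
        convert this using 2
        ext j
        simp [htype j]
  rw [hset, Set.ncard_coe_finset]
  rw [Finset.card_biUnion]
  · refine Finset.sum_congr rfl fun φ _ => ?_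
    rw [hbox]
    rw [Fintype.card_piFinset]
    refine Finset.prod_congr rfl fun j _ => ?_
    rw [Int.card_Ico]
    have : psum a ((φ j : ℕ) + 1) (j : ℕ) - psum a (φ j) (j : ℕ) = (a (φ j) (j : ℕ) : ℤ) := by
      simp [psum, Finset.sum_range_succ]
    rw [this, Int.toNat_natCast]
  · intro φ hφ ψ hψ hne
    rw [Function.onFun, Finset.disjoint_left]
    intro b hb1 hb2
    apply hne
    funext j
    have h1 := hbox_type φ b hb1 j
    have h2 := hbox_type ψ b hb2 j
    exact Fin.ext (h1 ▸ h2 ▸ rfl)
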